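/- Let P be a convex polytope that k-tiles ℝ^d with a discrete multiset Λ, and suppose that Λ is the disjoint union of two discrete multisets Λ₁ and Λ₂ (i.e. the multiplicity function of Λ is the sum of those of Λ₁ and Λ₂). If the set ℝ^d \ ((∂P + Λ₁) ∩ (∂P + Λ₂)) is path-connected and Λ₁ is non-empty, then there exists a positive integer m such that P m-tiles ℝ^d with Λ₁. -/

import Mathlib

open Set Pointwise

noncomputable section

abbrev Euc (d : ℕ) : Type := EuclideanSpace ℝ (Fin d)

/-- A "discrete multiset" of vectors: a multiplicity function with locally finite support. -/
def IsDiscreteMultiset {d : ℕ} (m : Euc d → ℕ) : Prop :=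
  ∀ x : Euc d, ∃ U ∈ nhds x, {y : Euc d | y ∈ U ∧ m y ≠ 0}.Finite

/-- `∑_{λ∈Λ} 1_{P+λ}(v)`, counted with multiplicity. -/
def coverCount {d : ℕ} (m : Euc d → ℕ) (P : Set (Euc d)) (v : Euc d) : ℕ :=
  ∑ᶠ l : Euc d, m l * P.indicator 1 (v - l)

/-- The set `∂P + Λ`. -/
def boundarySum {d : ℕ} (P : Set (Euc d)) (m : Euc d → ℕ) : Set (Euc d) :=
  {x : Euc d | ∃ l : Euc d, m l ≠ 0 ∧ x - l ∈ frontier P}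

/-- `P` `k`-tiles `ℝ^d` with the discrete multiset `m`: every point not in `∂P + Λ`
is covered exactly `k` times. -/
def Tiles {d : ℕ} (P : Set (Euc d)) (m : Euc d → ℕ) (k : ℕ) : Prop :=
  ∀ v : Euc d, v ∉ boundarySum P m → coverCount m P v = k

/-- A lattice in ℝ^d: a discrete additive subgroup of full rank, viewed as a set. -/
def IsLattice {d : ℕ} (L : Set (Euc d)) : Prop :=
  ∃ H : AddSubgroup (Euc d), L = (H : Set (Euc d)) ∧
    DiscreteTopology H ∧ Submodule.span ℝ (H : Set (Euc d)) = ⊤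

/-- A set viewed as a multiset with all multiplicities one. -/
def setMult {d : ℕ} (L : Set (Euc d)) : Euc d → ℕ := L.indicator 1

/-- A convex polytope: convex hull of a finite set of points, with nonempty interior. -/
def IsConvexPolytope {d : ℕ} (P : Set (Euc d)) : Prop :=
  (∃ S : Set (Euc d), S.Finite ∧ P = convexHull ℝ S) ∧ (interior P).Nonempty

/-- The half-open counterpart `P^h` of `P` with respect to the direction `h`. -/
def halfOpen {d : ℕ} (P : Set (Euc d)) (h : Euc d) : Set (Euc d) :=
  {v : Euc d | v ∈ closure P ∧
    ∃ ε : ℝ, 0 < ε ∧ ∀ c : ℝ, 0 < c → c < ε → v + c • h ∈ interior P}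

/-- Every line with direction `h` meets `∂P` in finitely many points. -/
def GoodDirection {d : ℕ} (P : Set (Euc d)) (h : Euc d) : Prop :=
  ∀ x : Euc d, {c : ℝ | x + c • h ∈ frontier P}.Finite

/-- `P^h` `k`-tiles `ℝ^d` with the discrete multiset `m`. -/
def TilesHalfOpen {d : ℕ} (P : Set (Euc d)) (h : Euc d) (m : Euc d → ℕ) (k : ℕ) : Prop :=
  ∀ v : Euc d, v ∉ boundarySum P m → coverCount m (halfOpen P h) v = k

/-- `L_Λ(v) = #(Λ ∩ (−1·P + v))`, counted with multiplicity. -/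
def LEnum {d : ℕ} (m : Euc d → ℕ) (P : Set (Euc d)) (v : Euc d) : ℕ :=
  ∑ᶠ l : Euc d, m l * Set.indicator (v +ᵥ ((-1 : ℝ) • P)) 1 l

/-- `L^h_Λ(v) = #(Λ ∩ (−1·P^h + v))`, counted with multiplicity. -/
def LEnumH {d : ℕ} (m : Euc d → ℕ) (P : Set (Euc d)) (h : Euc d) (v : Euc d) : ℕ :=
  LEnum m (halfOpen P h) v

section aux
variable {d : ℕ}

lemma aux_finite_mult {m : Euc d → ℕ} (hm : IsDiscreteMultiset m)
    {K : Set (Euc d)} (hK : IsCompact K) : {l | m l ≠ 0 ∧ l ∈ K}.Finite := by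
  choose U hU hfin using hm
  obtain ⟨t, -, ht⟩ := hK.elim_nhds_subcover U (fun x _ => hU x)
  refine ((t.finite_toSet).biUnion (fun x _ => hfin x)).subset ?_
  rintro l ⟨hl, hlK⟩
  have h2 := ht hlK
  simp only [Set.mem_iUnion] at h2
  obtain ⟨x, hx, hxl⟩ := h2
  exact Set.mem_biUnion hx ⟨hxl, hl⟩

lemma locT {m : Euc d → ℕ} (hm : IsDiscreteMultiset m) {A : Set (Euc d)} (hA : IsCompact A)
    (x : Euc d) : ∃ T : Finset (Euc d), (∀ l ∈ T, m l ≠ 0) ∧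
      ∀ l v, v ∈ Metric.closedBall x 1 → m l ≠ 0 → v - l ∈ A → l ∈ T := by
  have hc : IsCompact ((fun q : Euc d × Euc d => q.1 - q.2) '' (Metric.closedBall x 1 ×ˢ A)) :=
    ((isCompact_closedBall x 1).prod hA).image (continuous_fst.sub continuous_snd)
  have hfin := aux_finite_mult hm hc
  refine ⟨hfin.toFinset, fun l hl => ((Set.Finite.mem_toFinset _).1 hl).1,
    fun l v hv h1 h2 => ?_⟩
  rw [Set.Finite.mem_toFinset]
  exact ⟨h1, ⟨(v, v - l), ⟨hv, h2⟩, sub_sub_cancel v l⟩⟩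

lemma supp_fin {m : Euc d → ℕ} (hm : IsDiscreteMultiset m) {P : Set (Euc d)}
    (hPc : IsCompact P) (v : Euc d) :
    (Function.support fun l => m l * P.indicator 1 (v - l)).Finite := by
  refine (aux_finite_mult hm (hPc.image (show Continuous fun p : Euc d => v - p from continuous_const.sub continuous_id))).subset ?_
  intro l hl
  simp only [Function.mem_support] at hl
  have h1 : m l ≠ 0 := by intro h; simp [h] at hl
  have h2 : v - l ∈ P := by
    by_contra h; rw [Set.indicator_of_notMem h] at hl; simp at hl
  exact ⟨h1, ⟨v - l, h2, sub_sub_cancel v l⟩⟩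

lemma bsum_closed {m : Euc d → ℕ} (hm : IsDiscreteMultiset m) {P : Set (Euc d)}
    (hPc : IsCompact P) : IsClosed (boundarySum P m) := by
  have hfr : IsCompact (frontier P) :=
    hPc.of_isClosed_subset isClosed_frontier (hPc.isClosed.frontier_subset)
  rw [← isOpen_compl_iff, isOpen_iff_mem_nhds]
  intro x hx
  obtain ⟨T, hT0, hTmem⟩ := locT hm hfr x
  have hU : IsOpen (Metric.ball x 1 ∩ ⋂ l ∈ T, (fun v : Euc d => v - l) ⁻¹' (frontier P)ᶜ) :=
    Metric.isOpen_ball.inter (isOpen_biInter_finset fun l _ =>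
      isClosed_frontier.isOpen_compl.preimage (continuous_id.sub continuous_const))
  refine Filter.mem_of_superset (hU.mem_nhds ⟨Metric.mem_ball_self one_pos, ?_⟩) ?_
  · simp only [Set.mem_iInter, Set.mem_preimage, Set.mem_compl_iff]
    intro l hl h
    exact hx ⟨l, hT0 l hl, h⟩
  · rintro v ⟨hv1, hv2⟩ ⟨l, hl, hfr'⟩
    have hlT := hTmem l v (Metric.ball_subset_closedBall hv1) hl hfr'
    simp only [Set.mem_iInter, Set.mem_preimage, Set.mem_compl_iff] at hv2
    exact hv2 l hlT hfr'

lemma coverCount_loc_const {m : Euc d → ℕ} (hm : IsDiscreteMultiset m) {P : Set (Euc d)}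
    (hPc : IsCompact P) {x : Euc d} (hx : x ∉ boundarySum P m) :
    ∃ U : Set (Euc d), IsOpen U ∧ x ∈ U ∧ ∀ v ∈ U, coverCount m P v = coverCount m P x := by
  obtain ⟨T, hT0, hTmem⟩ := locT hm hPc x
  have hrep : ∀ v ∈ Metric.closedBall x 1,
      coverCount m P v = ∑ l ∈ T, m l * P.indicator 1 (v - l) := by
    intro v hv
    refine finsum_eq_finset_sum_of_support_subset _ (fun l hl => ?_)
    simp only [Function.mem_support] at hl
    have h1 : m l ≠ 0 := by intro h; simp [h] at hl
    have h2 : v - l ∈ P := by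
      by_contra h; rw [Set.indicator_of_notMem h] at hl; simp at hl
    exact hTmem l v hv h1 h2
  have hterm : ∀ l : Euc d, ∃ V : Set (Euc d), IsOpen V ∧ x ∈ V ∧
      (l ∈ T → ∀ v ∈ V, P.indicator (1 : Euc d → ℕ) (v - l) = P.indicator 1 (x - l)) := by
    intro l
    by_cases hlT : l ∈ T
    · have hnf : x - l ∉ frontier P := fun h => hx ⟨l, hT0 l hlT, h⟩
      by_cases hmem : x - l ∈ interior P
      · refine ⟨(fun v : Euc d => v - l) ⁻¹' interior P,
          isOpen_interior.preimage (continuous_id.sub continuous_const), hmem, ?_⟩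
        intro _ v hv
        rw [Set.indicator_of_mem (interior_subset hv), Set.indicator_of_mem (interior_subset hmem)]
        rfl
      · have hout : x - l ∉ P := by
          intro h
          exact hnf ⟨subset_closure h, hmem⟩
        refine ⟨(fun v : Euc d => v - l) ⁻¹' Pᶜ,
          hPc.isClosed.isOpen_compl.preimage (continuous_id.sub continuous_const), hout, ?_⟩
        intro _ v hv
        rw [Set.indicator_of_notMem hv, Set.indicator_of_notMem hout]
    · exact ⟨Set.univ, isOpen_univ, trivial, fun h => absurd h hlT⟩
  choose V hVopen hVmem hVconst using hterm
  refine ⟨Metric.ball x 1 ∩ ⋂ l ∈ T, V l,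
    Metric.isOpen_ball.inter (isOpen_biInter_finset fun l _ => hVopen l),
    ⟨Metric.mem_ball_self one_pos, Set.mem_biInter fun l _ => hVmem l⟩, ?_⟩
  rintro v ⟨hv1, hv2⟩
  rw [hrep v (Metric.ball_subset_closedBall hv1), hrep x (Metric.mem_closedBall_self zero_le_one)]
  refine Finset.sum_congr rfl fun l hl => ?_
  rw [hVconst l hl v (by exact Set.mem_iInter₂.1 hv2 l hl)]

end aux


theorem stmt_12 {d : ℕ} (P : Set (Euc d)) (hP : IsConvexPolytope P)
    (k : ℕ) (hk : 0 < k) (Λ Λ₁ Λ₂ : Euc d → ℕ)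
    (hΛ : IsDiscreteMultiset Λ)
    (hsplit : ∀ x : Euc d, Λ x = Λ₁ x + Λ₂ x)
    (hTile : Tiles P Λ k)
    (hconn : IsPathConnected ((boundarySum P Λ₁ ∩ boundarySum P Λ₂)ᶜ))
    (hne : ∃ x : Euc d, Λ₁ x ≠ 0) :
    ∃ m : ℕ, 0 < m ∧ Tiles P Λ₁ m := by
  classical
  obtain ⟨⟨S, hS, hPS⟩, hPint⟩ := hP
  have hPc : IsCompact P := hPS ▸ hS.isCompact_convexHull ℝ
  have hm1 : IsDiscreteMultiset Λ₁ := by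
    intro x
    obtain ⟨U, hU, hf⟩ := hΛ x
    exact ⟨U, hU, hf.subset (fun y hy => ⟨hy.1, fun h => hy.2 (by have := hsplit y; omega)⟩)⟩
  have hm2 : IsDiscreteMultiset Λ₂ := by
    intro x
    obtain ⟨U, hU, hf⟩ := hΛ x
    exact ⟨U, hU, hf.subset (fun y hy => ⟨hy.1, fun h => hy.2 (by have := hsplit y; omega)⟩)⟩
  set B₁ := boundarySum P Λ₁ with hB₁
  set B₂ := boundarySum P Λ₂ with hB₂
  have hB1c : IsClosed B₁ := bsum_closed hm1 hPc
  have hB2c : IsClosed B₂ := bsum_closed hm2 hPc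
  have hBsum : boundarySum P Λ = B₁ ∪ B₂ := by
    ext x
    simp only [boundarySum, Set.mem_setOf_eq, Set.mem_union, hB₁, hB₂]
    constructor
    · rintro ⟨l, hl, hfr⟩
      have := hsplit l
      rcases Nat.eq_zero_or_pos (Λ₁ l) with h | h
      · exact Or.inr ⟨l, by omega, hfr⟩
      · exact Or.inl ⟨l, by omega, hfr⟩
    · rintro (⟨l, hl, hfr⟩ | ⟨l, hl, hfr⟩) <;>
        exact ⟨l, by have := hsplit l; omega, hfr⟩
  have hdecomp : ∀ v, coverCount Λ P v = coverCount Λ₁ P v + coverCount Λ₂ P v := by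
    intro v
    unfold coverCount
    rw [← finsum_add_distrib (supp_fin hm1 hPc v) (supp_fin hm2 hPc v)]
    exact finsum_congr fun l => by rw [hsplit l, add_mul]
  set g : Euc d → ℤ := fun x => if x ∈ B₁ then (k : ℤ) - coverCount Λ₂ P x
    else (coverCount Λ₁ P x : ℤ) with hg
  -- g is constant on (B₁ ∩ B₂)ᶜ
  have hgconst : ∀ a ∈ (B₁ ∩ B₂)ᶜ, ∀ b ∈ (B₁ ∩ B₂)ᶜ, g a = g b := by
    set Sc := (B₁ ∩ B₂)ᶜ with hSc
    have hpre : PreconnectedSpace Sc := Subtype.preconnectedSpace hconn.isConnected.isPreconnected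
    have hloc : IsLocallyConstant (fun s : Sc => g s.val) := by
      rw [IsLocallyConstant.iff_exists_open]
      rintro ⟨x, hx⟩
      by_cases hxB : x ∈ B₁
      · have hxB2 : x ∉ B₂ := fun h => hx ⟨hxB, h⟩
        obtain ⟨U2, hU2o, hxU2, hU2⟩ := coverCount_loc_const hm2 hPc hxB2
        refine ⟨Subtype.val ⁻¹' (U2 ∩ B₂ᶜ),
          (hU2o.inter hB2c.isOpen_compl).preimage continuous_subtype_val, ⟨hxU2, hxB2⟩, ?_⟩
        rintro ⟨y, hy⟩ ⟨hyU2, hyB2⟩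
        show g y = g x
        by_cases hyB : y ∈ B₁
        · simp only [hg, if_pos hyB, if_pos hxB, hU2 y hyU2]
        · have hyout : y ∉ boundarySum P Λ := by
            rw [hBsum]; rintro (h | h); exacts [hyB h, hyB2 h]
          have hky : coverCount Λ₁ P y + coverCount Λ₂ P y = k := by
            rw [← hdecomp]; exact hTile y hyout
          simp only [hg, if_neg hyB, if_pos hxB, ← hU2 y hyU2]
          omega
      · obtain ⟨U1, hU1o, hxU1, hU1⟩ := coverCount_loc_const hm1 hPc hxB
        refine ⟨Subtype.val ⁻¹' (U1 ∩ B₁ᶜ),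
          (hU1o.inter hB1c.isOpen_compl).preimage continuous_subtype_val, ⟨hxU1, hxB⟩, ?_⟩
        rintro ⟨y, hy⟩ ⟨hyU1, hyB1⟩
        show g y = g x
        simp only [hg, if_neg hyB1, if_neg hxB, hU1 y hyU1]
    intro a ha b hb
    exact hloc.apply_eq_of_preconnectedSpace ⟨a, ha⟩ ⟨b, hb⟩
  -- find a good point v where coverCount Λ₁ is positive
  obtain ⟨l₀, hl₀⟩ := hne
  obtain ⟨p₀, hp₀⟩ := hPint
  have hfr : IsCompact (frontier P) :=
    hPc.of_isClosed_subset isClosed_frontier (hPc.isClosed.frontier_subset)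
  obtain ⟨T, hT0, hTmem⟩ := locT hm1 hfr (l₀ + p₀)
  have hdense : ∀ T' : Finset (Euc d), Dense (⋂ l ∈ T', (fun v : Euc d => v - l) ⁻¹' (frontier P)ᶜ) := by
    intro T'
    have key : ∀ l : Euc d, Dense ((fun v : Euc d => v - l) ⁻¹' (frontier P)ᶜ) ∧
        IsOpen ((fun v : Euc d => v - l) ⁻¹' (frontier P)ᶜ) := by
      intro l
      constructor
      · rw [Set.preimage_compl, ← interior_eq_empty_iff_dense_compl]
        have : (fun v : Euc d => v - l) = (Homeomorph.addRight (-l) : Euc d ≃ₜ Euc d) := by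
          funext v; simp [sub_eq_add_neg]
        rw [this, ← Homeomorph.preimage_interior, interior_frontier hPc.isClosed,
          Set.preimage_empty]
      · exact isClosed_frontier.isOpen_compl.preimage (continuous_id.sub continuous_const)
    classical
    induction T' using Finset.induction with
    | empty => simpa using dense_univ
    | @insert a s ha ih =>
      rw [Finset.set_biInter_insert]
      exact Dense.inter_of_isOpen_left (key a).1 ih (key a).2
  have hWopen : IsOpen (Metric.ball (l₀ + p₀) 1 ∩ (fun v : Euc d => v - l₀) ⁻¹' interior P) :=
    Metric.isOpen_ball.inter (isOpen_interior.preimage (continuous_id.sub continuous_const))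
  have hWne : (Metric.ball (l₀ + p₀) 1 ∩ (fun v : Euc d => v - l₀) ⁻¹' interior P).Nonempty :=
    ⟨l₀ + p₀, Metric.mem_ball_self one_pos, by simpa using hp₀⟩
  obtain ⟨v, ⟨hv1, hv2⟩, hvD⟩ := (hdense T).inter_open_nonempty _ hWopen hWne
  have hvB1 : v ∉ B₁ := by
    rintro ⟨l, hl, hfr'⟩
    have hlT := hTmem l v (Metric.ball_subset_closedBall hv1) hl hfr'
    exact (Set.mem_iInter₂.1 hvD l hlT) hfr'
  have hvP : v - l₀ ∈ interior P := hv2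
  have hpos : 0 < coverCount Λ₁ P v := by
    have hle : Λ₁ l₀ * P.indicator 1 (v - l₀) ≤ coverCount Λ₁ P v :=
      single_le_finsum l₀ (supp_fin hm1 hPc v) (fun j => Nat.zero_le _)
    rw [Set.indicator_of_mem (interior_subset hvP)] at hle
    simp only [Pi.one_apply, mul_one] at hle
    omega
  refine ⟨coverCount Λ₁ P v, hpos, ?_⟩
  intro w hw
  have hwS : w ∈ (B₁ ∩ B₂)ᶜ := fun h => hw h.1
  have hvS : v ∈ (B₁ ∩ B₂)ᶜ := fun h => hvB1 h.1
  have := hgconst w hwS v hvS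
  simp only [hg, if_neg (show w ∉ B₁ from hw), if_neg hvB1] at this
  exact_mod_cast this
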